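/- arXiv:1507.02630 — 6 statements merged into one kernel-verified Lean document; each statement's English description precedes it below -/
import Mathlib

section
/- Every semistable configuration in ℂ^m (m ≥ 1) is decomposable, i.e., it can be written as a finite nonnegative rational linear combination of indicator functions of bases of ℂ^m. -/
open scoped Classical

/-- The mass of a configuration `w` on a complex linear subspace `V` of `ℂ^m`. -/
noncomputable def massOn (m : ℕ) (w : (Fin m → ℂ) →₀ ℚ)
    (V : Submodule ℂ (Fin m → ℂ)) : ℚ :=
  ∑ v ∈ w.support.filter (fun v => v ∈ V), w v

/-- The total mass of a configuration. -/
noncomputable def totalMass (m : ℕ) (w : (Fin m → ℂ) →₀ ℚ) : ℚ :=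
  ∑ v ∈ w.support, w v

/-- A configuration: a finitely supported function `w : ℂ^m → ℚ` with
nonnegative values and `w 0 = 0`. -/
def IsConfiguration (m : ℕ) (w : (Fin m → ℂ) →₀ ℚ) : Prop :=
  (∀ v, 0 ≤ w v) ∧ w 0 = 0

/-- Semistability: every subspace of dimension `k` has mass at most `k·d/m`. -/
noncomputable def Semistable (m : ℕ) (w : (Fin m → ℂ) →₀ ℚ) : Prop :=
  ∀ V : Submodule ℂ (Fin m → ℂ),
    massOn m w V ≤ (Module.finrank ℂ V : ℚ) * totalMass m w / (m : ℚ)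

section Aux

open Module Submodule Finset

variable {m : ℕ}

/-- tightness -/
def Tight (m : ℕ) (w : (Fin m → ℂ) →₀ ℚ) (V : Submodule ℂ (Fin m → ℂ)) : Prop :=
  massOn m w V * m = (Module.finrank ℂ V : ℚ) * totalMass m w

lemma semistable_mul (hm : 1 ≤ m) {w : (Fin m → ℂ) →₀ ℚ} (hss : Semistable m w)
    (V : Submodule ℂ (Fin m → ℂ)) :
    massOn m w V * m ≤ (Module.finrank ℂ V : ℚ) * totalMass m w := by
  have hm' : (0:ℚ) < m := by exact_mod_cast hm
  have := hss V
  rw [le_div_iff₀ hm'] at this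
  exact this

lemma massOn_eq_sum_superset {w : (Fin m → ℂ) →₀ ℚ} {s : Finset (Fin m → ℂ)}
    (hs : w.support ⊆ s) (V : Submodule ℂ (Fin m → ℂ)) :
    massOn m w V = ∑ v ∈ s.filter (fun v => v ∈ V), w v := by
  apply Finset.sum_subset
  · exact Finset.filter_subset_filter _ hs
  · intro x hx hx'
    by_contra h
    exact hx' (Finset.mem_filter.mpr ⟨Finset.mem_coe.mp (Finsupp.mem_support_iff.mpr h),
      (Finset.mem_filter.mp hx).2⟩)

lemma massOn_span_support_inter (w : (Fin m → ℂ) →₀ ℚ) (V : Submodule ℂ (Fin m → ℂ)) :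
    w.support.filter (fun v => v ∈ V)
      = w.support.filter (fun v => v ∈ Submodule.span ℂ
          ((w.support.filter (fun v => v ∈ V) : Finset _) : Set (Fin m → ℂ))) := by
  ext x
  simp only [Finset.mem_filter]
  constructor
  · rintro ⟨hx, hxV⟩
    exact ⟨hx, Submodule.subset_span (by
      simp only [Finset.coe_filter, Set.mem_setOf_eq]
      exact ⟨hx, hxV⟩)⟩
  · rintro ⟨hx, hxs⟩
    refine ⟨hx, ?_⟩
    have : Submodule.span ℂ ((w.support.filter (fun v => v ∈ V) : Finset _) : Set (Fin m → ℂ)) ≤ V := by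
      rw [Submodule.span_le]
      intro y hy
      simp only [Finset.coe_filter, Set.mem_setOf_eq] at hy
      exact hy.2
    exact this hxs

lemma massOn_eq_massOn_span (w : (Fin m → ℂ) →₀ ℚ) (V : Submodule ℂ (Fin m → ℂ)) :
    massOn m w V = massOn m w (Submodule.span ℂ
      ((w.support.filter (fun v => v ∈ V) : Finset _) : Set (Fin m → ℂ))) := by
  unfold massOn
  exact Finset.sum_congr (massOn_span_support_inter w V) fun _ _ => rfl

lemma span_filter_le (w : (Fin m → ℂ) →₀ ℚ) (V : Submodule ℂ (Fin m → ℂ)) :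
    Submodule.span ℂ ((w.support.filter (fun v => v ∈ V) : Finset _) : Set (Fin m → ℂ)) ≤ V := by
  rw [Submodule.span_le]
  intro y hy
  simp only [Finset.coe_filter, Set.mem_setOf_eq] at hy
  exact hy.2

/-- every tight subspace is the span of the support vectors it contains (if total mass > 0) -/
lemma tight_eq_span {w : (Fin m → ℂ) →₀ ℚ} (hm : 1 ≤ m) (hss : Semistable m w)
    (hd : 0 < totalMass m w) {V : Submodule ℂ (Fin m → ℂ)} (hV : Tight m w V) :
    Submodule.span ℂ ((w.support.filter (fun v => v ∈ V) : Finset _) : Set (Fin m → ℂ)) = V := by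
  set V' := Submodule.span ℂ ((w.support.filter (fun v => v ∈ V) : Finset _) : Set (Fin m → ℂ))
  have h1 : massOn m w V = massOn m w V' := massOn_eq_massOn_span w V
  have h2 := semistable_mul hm hss V'
  rw [← h1] at h2
  rw [Tight] at hV
  rw [hV] at h2
  have hrk : (finrank ℂ V : ℚ) ≤ (finrank ℂ V' : ℚ) := by
    by_contra hcon
    push_neg at hcon
    nlinarith
  have hrk' : finrank ℂ V ≤ finrank ℂ V' := by exact_mod_cast hrk
  exact Submodule.eq_of_le_of_finrank_le (span_filter_le w V) hrk'

lemma tight_top (w : (Fin m → ℂ) →₀ ℚ) : Tight m w (⊤ : Submodule ℂ (Fin m → ℂ)) := by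
  rw [Tight]
  have h1 : massOn m w ⊤ = totalMass m w := by
    unfold massOn totalMass
    congr 1
    simp
  have h2 : finrank ℂ (⊤ : Submodule ℂ (Fin m → ℂ)) = m := by
    rw [finrank_top]
    simp [Module.finrank_pi]
  rw [h1, h2]
  ring

end Aux

section Aux2
open Module Submodule Finset
variable {m : ℕ}

lemma mass_modular {w : (Fin m → ℂ) →₀ ℚ} (hw : ∀ v, 0 ≤ w v)
    (V W : Submodule ℂ (Fin m → ℂ)) :
    massOn m w V + massOn m w W ≤ massOn m w (V ⊔ W) + massOn m w (V ⊓ W) := by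
  classical
  set A := w.support.filter (fun v => v ∈ V)
  set B := w.support.filter (fun v => v ∈ W)
  have h1 : massOn m w V + massOn m w W = (∑ v ∈ A ∪ B, w v) + ∑ v ∈ A ∩ B, w v :=
    (Finset.sum_union_inter).symm
  have h2 : A ∩ B = w.support.filter (fun v => v ∈ V ⊓ W) := by
    ext x
    simp only [A, B, Finset.mem_inter, Finset.mem_filter, Submodule.mem_inf]
    tauto
  have h3 : A ∪ B ⊆ w.support.filter (fun v => v ∈ V ⊔ W) := by
    intro x hx
    simp only [A, B, Finset.mem_union, Finset.mem_filter] at hx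
    rcases hx with ⟨hs, hv⟩ | ⟨hs, hv⟩ <;>
      exact Finset.mem_filter.mpr ⟨hs, by
        first
        | exact Submodule.mem_sup_left hv
        | exact Submodule.mem_sup_right hv⟩
  have h4 : (∑ v ∈ A ∪ B, w v) ≤ massOn m w (V ⊔ W) :=
    Finset.sum_le_sum_of_subset_of_nonneg h3 (fun i _ _ => hw i)
  have hAB : (∑ v ∈ A ∩ B, w v) = massOn m w (V ⊓ W) := by rw [h2]; rfl
  linarith [h1, hAB, h4]

lemma finrank_modular (V W : Submodule ℂ (Fin m → ℂ)) :
    finrank ℂ (V ⊔ W : Submodule ℂ (Fin m → ℂ)) + finrank ℂ (V ⊓ W : Submodule ℂ (Fin m → ℂ))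
      = finrank ℂ V + finrank ℂ W := by
  exact Submodule.finrank_sup_add_finrank_inf_eq V W

/-- tightness is closed under sup and inf, and mass in the sup concentrates on the union -/
lemma tight_sup_inf (hm : 1 ≤ m) {w : (Fin m → ℂ) →₀ ℚ} (hw : ∀ v, 0 ≤ w v)
    (hss : Semistable m w) {V W : Submodule ℂ (Fin m → ℂ)}
    (hV : Tight m w V) (hW : Tight m w W) :
    Tight m w (V ⊔ W) ∧ Tight m w (V ⊓ W) ∧
      ∀ x ∈ w.support, x ∈ V ⊔ W → x ∈ V ∨ x ∈ W := by
  classical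
  have hm' : (0:ℚ) < m := by exact_mod_cast hm
  have hsup := semistable_mul hm hss (V ⊔ W)
  have hinf := semistable_mul hm hss (V ⊓ W)
  have hmod := mass_modular hw V W
  have hrk : ((finrank ℂ (V ⊔ W : Submodule ℂ (Fin m → ℂ)) : ℚ)
      + (finrank ℂ (V ⊓ W : Submodule ℂ (Fin m → ℂ)) : ℚ))
      = (finrank ℂ V : ℚ) + (finrank ℂ W : ℚ) := by
    exact_mod_cast congrArg (Nat.cast : ℕ → ℚ) (finrank_modular V W)
  rw [Tight] at hV hW
  have hmodm : massOn m w V * m + massOn m w W * m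
      ≤ massOn m w (V ⊔ W) * m + massOn m w (V ⊓ W) * m := by
    nlinarith [mul_nonneg (sub_nonneg.mpr hmod) hm'.le]
  have hrkd : (finrank ℂ (V ⊔ W : Submodule ℂ (Fin m → ℂ)) : ℚ) * totalMass m w
      + (finrank ℂ (V ⊓ W : Submodule ℂ (Fin m → ℂ)) : ℚ) * totalMass m w
      = (finrank ℂ V : ℚ) * totalMass m w + (finrank ℂ W : ℚ) * totalMass m w := by
    linear_combination totalMass m w * hrk
  have hts : Tight m w (V ⊔ W) := by rw [Tight]; linarith
  have hti : Tight m w (V ⊓ W) := by rw [Tight]; linarith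
  refine ⟨hts, hti, ?_⟩
  -- concentration
  rw [Tight] at hts hti
  have heq : massOn m w (V ⊔ W) + massOn m w (V ⊓ W) = massOn m w V + massOn m w W := by
    have h' : (massOn m w (V ⊔ W) + massOn m w (V ⊓ W)) * m
        = (massOn m w V + massOn m w W) * m := by
      have e1 : (massOn m w (V ⊔ W) + massOn m w (V ⊓ W)) * m
          = massOn m w (V ⊔ W) * m + massOn m w (V ⊓ W) * m := by ring
      have e2 : (massOn m w V + massOn m w W) * m
          = massOn m w V * m + massOn m w W * m := by ring
      rw [e1, e2]
      linarith
    exact mul_right_cancel₀ (ne_of_gt hm') h'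
  set A := w.support.filter (fun v => v ∈ V)
  set B := w.support.filter (fun v => v ∈ W)
  have h1 : massOn m w V + massOn m w W = (∑ v ∈ A ∪ B, w v) + ∑ v ∈ A ∩ B, w v :=
    (Finset.sum_union_inter).symm
  have h2 : A ∩ B = w.support.filter (fun v => v ∈ V ⊓ W) := by
    ext x
    simp only [A, B, Finset.mem_inter, Finset.mem_filter, Submodule.mem_inf]
    tauto
  have h3 : A ∪ B ⊆ w.support.filter (fun v => v ∈ V ⊔ W) := by
    intro x hx
    simp only [A, B, Finset.mem_union, Finset.mem_filter] at hx
    rcases hx with ⟨hs, hv⟩ | ⟨hs, hv⟩ <;>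
      exact Finset.mem_filter.mpr ⟨hs, by
        first
        | exact Submodule.mem_sup_left hv
        | exact Submodule.mem_sup_right hv⟩
  have hUeq : (∑ v ∈ A ∪ B, w v) = massOn m w (V ⊔ W) := by
    have hAB : massOn m w (V ⊓ W) = ∑ v ∈ A ∩ B, w v := by rw [h2]; rfl
    rw [hAB] at heq
    linarith [h1, heq]
  -- now conclude pointwise
  intro x hxs hxsup
  by_contra hcon
  push_neg at hcon
  have hxF : x ∈ w.support.filter (fun v => v ∈ V ⊔ W) := Finset.mem_filter.mpr ⟨hxs, hxsup⟩
  have hxAB : x ∉ A ∪ B := by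
    simp only [A, B, Finset.mem_union, Finset.mem_filter]
    push_neg
    exact ⟨fun _ => hcon.1, fun _ => hcon.2⟩
  have hsd : (∑ v ∈ w.support.filter (fun v => v ∈ V ⊔ W) \ (A ∪ B), w v)
      + ∑ v ∈ A ∪ B, w v = massOn m w (V ⊔ W) := Finset.sum_sdiff h3
  have hzero : (∑ v ∈ w.support.filter (fun v => v ∈ V ⊔ W) \ (A ∪ B), w v) = 0 := by
    rw [hUeq] at hsd; linarith
  have hxmem : x ∈ w.support.filter (fun v => v ∈ V ⊔ W) \ (A ∪ B) :=
    Finset.mem_sdiff.mpr ⟨hxF, hxAB⟩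
  have hle : w x ≤ ∑ v ∈ w.support.filter (fun v => v ∈ V ⊔ W) \ (A ∪ B), w v :=
    Finset.single_le_sum (fun i _ => hw i) hxmem
  have hxpos : 0 < w x := lt_of_le_of_ne (hw x) (Ne.symm (Finsupp.mem_support_iff.mp hxs))
  linarith

end Aux2

section Aux3
open Module Submodule Finset
variable {m : ℕ}

lemma exists_min_tight (w : (Fin m → ℂ) →₀ ℚ) {V : Submodule ℂ (Fin m → ℂ)} (hV : V ≠ ⊤) :
    ∃ V₁ : Submodule ℂ (Fin m → ℂ), Tight m w V₁ ∧ V < V₁ ∧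
      ∀ Z, Tight m w Z → V ≤ Z → Z ≤ V₁ → Z = V ∨ Z = V₁ := by
  classical
  set S : Set ℕ := {k | ∃ Z : Submodule ℂ (Fin m → ℂ), Tight m w Z ∧ V < Z ∧ finrank ℂ Z = k}
  have hSne : S.Nonempty := ⟨finrank ℂ (⊤ : Submodule ℂ (Fin m → ℂ)),
    ⟨⊤, tight_top w, lt_top_iff_ne_top.mpr hV, rfl⟩⟩
  obtain ⟨V₁, hT, hlt, hrk⟩ := Nat.sInf_mem hSne
  refine ⟨V₁, hT, hlt, ?_⟩
  intro Z hZ hVZ hZV₁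
  by_cases hZ' : Z = V
  · exact Or.inl hZ'
  · right
    have hVltZ : V < Z := lt_of_le_of_ne hVZ (Ne.symm hZ')
    have hmem : finrank ℂ Z ∈ S := ⟨Z, hZ, hVltZ, rfl⟩
    have hle : sInf S ≤ finrank ℂ Z := Nat.sInf_le hmem
    rw [← hrk] at hle
    exact Submodule.eq_of_le_of_finrank_le hZV₁ hle

lemma invariant_step (hm : 1 ≤ m) {w : (Fin m → ℂ) →₀ ℚ} (hw : ∀ v, 0 ≤ w v)
    (hss : Semistable m w)
    {V V₁ : Submodule ℂ (Fin m → ℂ)} (hV : Tight m w V) (hV₁ : Tight m w V₁) (hlt : V < V₁)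
    (hmin : ∀ Z, Tight m w Z → V ≤ Z → Z ≤ V₁ → Z = V ∨ Z = V₁)
    {B₀ B₁ : Set (Fin m → ℂ)} (hB₀V : B₀ ⊆ ↑V)
    (hspan₀ : Submodule.span ℂ B₀ = V)
    (hB₁s : B₁ ⊆ ↑w.support) (hB₁V : B₁ ⊆ ↑V₁) (hsub : B₀ ⊆ B₁)
    (hind₁ : LinearIndependent ℂ ((↑) : B₁ → (Fin m → ℂ)))
    (hspan₁ : Submodule.span ℂ B₁ = V₁)
    (hinv : ∀ Z, Tight m w Z → Z ⊓ V ≤ Submodule.span ℂ (B₀ ∩ ↑Z)) :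
    ∀ Z, Tight m w Z → Z ⊓ V₁ ≤ Submodule.span ℂ (B₁ ∩ ↑Z) := by
  intro Z hZ
  set W : Submodule ℂ (Fin m → ℂ) := Z ⊓ V with hWdef
  set W' : Submodule ℂ (Fin m → ℂ) := Z ⊓ V₁ with hW'def
  have hW' : Tight m w W' := (tight_sup_inf hm hw hss hZ hV₁).2.1
  have hK : Tight m w (W' ⊔ V) := (tight_sup_inf hm hw hss hW' hV).1
  have hVK : V ≤ W' ⊔ V := le_sup_right
  have hKV₁ : W' ⊔ V ≤ V₁ := sup_le (by simp [hW'def]) hlt.le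
  rcases hmin _ hK hVK hKV₁ with hKeqV | hKeqV₁
  · -- W' ≤ V, so Z ⊓ V₁ = Z ⊓ V and the old invariant applies
    have hW'V : W' ≤ V := le_trans le_sup_left (le_of_eq hKeqV)
    have hW'W : W' ≤ Submodule.span ℂ (B₀ ∩ ↑Z) :=
      le_trans (le_inf inf_le_left hW'V) (hinv Z hZ)
    exact le_trans hW'W (Submodule.span_mono (Set.inter_subset_inter_left _ hsub))
  · -- main case
    set N : Set (Fin m → ℂ) := B₁ \ B₀ with hNdef
    have hNV : ∀ b ∈ N, b ∉ V := by
      rintro b ⟨hb₁, hb₀⟩ hbV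
      have himg : ((↑) : B₁ → (Fin m → ℂ)) '' {y : B₁ | (y : Fin m → ℂ) ∈ B₀} = B₀ := by
        ext x
        constructor
        · rintro ⟨y, hy, rfl⟩; exact hy
        · intro hx; exact ⟨⟨x, hsub hx⟩, hx, rfl⟩
      have := hind₁.notMem_span_image (s := {y : B₁ | (y : Fin m → ℂ) ∈ B₀})
        (x := ⟨b, hb₁⟩) hb₀
      rw [himg, hspan₀] at this
      exact this hbV
    have hconc := (tight_sup_inf hm hw hss hW' hV).2.2
    have hNW' : N ⊆ ↑W' := by
      intro b hb
      have hbs : b ∈ w.support := hB₁s hb.1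
      have hbV₁ : b ∈ V₁ := hB₁V hb.1
      have hbK : b ∈ W' ⊔ V := by rw [hKeqV₁]; exact hbV₁
      rcases hconc b hbs hbK with h | h
      · exact h
      · exact absurd h (hNV b hb)
    set X : Submodule ℂ (Fin m → ℂ) := Submodule.span ℂ ((B₀ ∩ ↑Z) ∪ N) with hXdef
    have hXW' : X ≤ W' := by
      rw [hXdef, Submodule.span_le]
      rintro b (⟨hb₀, hbZ⟩ | hbN)
      · exact Submodule.mem_inf.mpr ⟨hbZ, hlt.le (hB₀V hb₀)⟩
      · exact hNW' hbN
    have hWX : W ≤ X := le_trans (hinv Z hZ)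
      (Submodule.span_mono (Set.subset_union_left))
    have hXV : X ⊔ V = V₁ := by
      apply le_antisymm
      · exact sup_le (le_trans hXW' inf_le_right) hlt.le
      · rw [← hspan₁, Submodule.span_le]
        intro b hb
        by_cases hb₀ : b ∈ B₀
        · exact Submodule.mem_sup_right (hspan₀ ▸ Submodule.subset_span hb₀)
        · exact Submodule.mem_sup_left
            (Submodule.subset_span (Or.inr ⟨hb, hb₀⟩))
    have hW'infV : W' ⊓ V = W := by
      rw [hW'def, hWdef, inf_assoc, inf_eq_right.mpr hlt.le]
    -- rank computation
    have r1 : finrank ℂ (W' ⊔ V : Submodule ℂ (Fin m → ℂ))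
        + finrank ℂ (W' ⊓ V : Submodule ℂ (Fin m → ℂ))
        = finrank ℂ W' + finrank ℂ V := finrank_modular W' V
    rw [hKeqV₁, hW'infV] at r1
    have r2 : finrank ℂ (X ⊔ V : Submodule ℂ (Fin m → ℂ))
        + finrank ℂ (X ⊓ V : Submodule ℂ (Fin m → ℂ))
        = finrank ℂ X + finrank ℂ V := finrank_modular X V
    rw [hXV] at r2
    have hWXV : finrank ℂ W ≤ finrank ℂ (X ⊓ V : Submodule ℂ (Fin m → ℂ)) :=
      Submodule.finrank_mono (le_inf hWX inf_le_right)
    have hfr : finrank ℂ W' ≤ finrank ℂ X := by omega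
    have hXeq : X = W' := Submodule.eq_of_le_of_finrank_le hXW' hfr
    have hfin : (B₀ ∩ ↑Z) ∪ N ⊆ B₁ ∩ ↑Z := by
      rintro b (⟨hb₀, hbZ⟩ | hbN)
      · exact ⟨hsub hb₀, hbZ⟩
      · exact ⟨hbN.1, inf_le_left (α := Submodule ℂ (Fin m → ℂ)) (hNW' hbN)⟩
    calc Z ⊓ V₁ = X := hXeq.symm
    _ ≤ Submodule.span ℂ (B₁ ∩ ↑Z) := Submodule.span_mono hfin

end Aux3

section Aux4
open Module Submodule Finset
variable {m : ℕ}

lemma tight_bot {w : (Fin m → ℂ) →₀ ℚ} (hw0 : w 0 = 0) : Tight m w (⊥ : Submodule ℂ (Fin m → ℂ)) := by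
  rw [Tight]
  have h1 : massOn m w ⊥ = 0 := by
    unfold massOn
    apply Finset.sum_eq_zero
    intro x hx
    rw [Finset.mem_filter, Submodule.mem_bot] at hx
    rw [hx.2, hw0]
  rw [h1]
  simp

lemma finrank_amb : finrank ℂ (Fin m → ℂ) = m := by
  simp [Module.finrank_pi]

lemma exists_adapted_aux (hm : 1 ≤ m) {w : (Fin m → ℂ) →₀ ℚ} (hw : ∀ v, 0 ≤ w v)
    (hss : Semistable m w) (hd : 0 < totalMass m w) :
    ∀ (j : ℕ) (V : Submodule ℂ (Fin m → ℂ)) (B₀ : Set (Fin m → ℂ)),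
      Tight m w V → B₀ ⊆ ↑w.support → B₀ ⊆ ↑V →
      LinearIndependent ℂ ((↑) : B₀ → (Fin m → ℂ)) → Submodule.span ℂ B₀ = V →
      (∀ Z, Tight m w Z → Z ⊓ V ≤ Submodule.span ℂ (B₀ ∩ ↑Z)) → m - finrank ℂ V ≤ j →
      ∃ B : Set (Fin m → ℂ), B₀ ⊆ B ∧ B ⊆ ↑w.support ∧
        LinearIndependent ℂ ((↑) : B → (Fin m → ℂ)) ∧ Submodule.span ℂ B = ⊤ ∧
        ∀ Z, Tight m w Z → Z ≤ Submodule.span ℂ (B ∩ ↑Z) := by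
  intro j
  induction j with
  | zero =>
    intro V B₀ hV hB₀s hB₀V hind hspan hinv hj
    by_cases hVtop : V = ⊤
    · refine ⟨B₀, subset_rfl, hB₀s, hind, hVtop ▸ hspan, ?_⟩
      intro Z hZ
      have := hinv Z hZ
      rwa [hVtop, inf_top_eq] at this
    · exfalso
      have h1 : finrank ℂ V < m := by
        have := Submodule.finrank_lt_finrank_of_lt (lt_top_iff_ne_top.mpr hVtop)
        rwa [finrank_top, finrank_amb] at this
      omega
  | succ j ih =>
    intro V B₀ hV hB₀s hB₀V hind hspan hinv hj
    by_cases hVtop : V = ⊤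
    · refine ⟨B₀, subset_rfl, hB₀s, hind, hVtop ▸ hspan, ?_⟩
      intro Z hZ
      have := hinv Z hZ
      rwa [hVtop, inf_top_eq] at this
    · obtain ⟨V₁, hV₁, hlt, hmin⟩ := exists_min_tight w hVtop
      set t : Set (Fin m → ℂ) := ↑(w.support.filter (fun v => v ∈ V₁)) with ht
      have hspan_t : Submodule.span ℂ t = V₁ := tight_eq_span hm hss hd hV₁
      have hB₀t : B₀ ⊆ t := by
        intro b hb
        rw [ht]
        simp only [Finset.coe_filter, Set.mem_setOf_eq]
        exact ⟨Finset.mem_coe.mp (hB₀s hb), hlt.le (hB₀V hb)⟩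
      obtain ⟨B₁, hB₁t, hsub, htspan, hind₁⟩ := exists_linearIndepOn_extension (v := id) hind hB₀t
      have htV₁ : t ⊆ ↑V₁ := by
        intro x hx
        rw [ht] at hx
        simp only [Finset.coe_filter, Set.mem_setOf_eq] at hx
        exact hx.2
      have hB₁V₁ : B₁ ⊆ ↑V₁ := fun x hx => htV₁ (hB₁t hx)
      have hB₁s : B₁ ⊆ ↑w.support := by
        intro x hx
        have := hB₁t hx
        rw [ht] at this
        simp only [Finset.coe_filter, Set.mem_setOf_eq] at this
        exact this.1
      have hspan₁ : Submodule.span ℂ B₁ = V₁ := by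
        apply le_antisymm
        · rw [Submodule.span_le]
          exact hB₁V₁
        · rw [← hspan_t]
          rw [Submodule.span_le]
          simpa using htspan
      have hinv₁ := invariant_step hm hw hss hV hV₁ hlt hmin hB₀V hspan hB₁s hB₁V₁ hsub
        hind₁ hspan₁ hinv
      have hfr : finrank ℂ V < finrank ℂ V₁ := Submodule.finrank_lt_finrank_of_lt hlt
      obtain ⟨B, hBsub, hBs, hBind, hBspan, hBad⟩ :=
        ih V₁ B₁ hV₁ hB₁s hB₁V₁ hind₁ hspan₁ hinv₁ (by omega)
      exact ⟨B, hsub.trans hBsub, hBs, hBind, hBspan, hBad⟩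

lemma exists_adapted_basis (hm : 1 ≤ m) {w : (Fin m → ℂ) →₀ ℚ}
    (hw : ∀ v, 0 ≤ w v) (hw0 : w 0 = 0)
    (hss : Semistable m w) (hd : 0 < totalMass m w) :
    ∃ B : Finset (Fin m → ℂ), (B : Set (Fin m → ℂ)) ⊆ (↑w.support : Set (Fin m → ℂ)) ∧
      B.card = m ∧
      LinearIndependent ℂ (fun v : (B : Set (Fin m → ℂ)) => (v : Fin m → ℂ)) ∧
      ∀ Z, Tight m w Z → Z ≤ Submodule.span ℂ ((B : Set (Fin m → ℂ)) ∩ ↑Z) := by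
  obtain ⟨B, _, hBs, hind, hspan, hadapt⟩ := exists_adapted_aux hm hw hss hd m ⊥ ∅
    (tight_bot hw0) (Set.empty_subset _) (Set.empty_subset _)
    (linearIndependent_empty ℂ _) Submodule.span_empty
    (fun Z _ => by rw [inf_bot_eq]; exact bot_le) (by simp)
  have hfin : B.Finite := hind.setFinite
  set F : Finset (Fin m → ℂ) := hfin.toFinset with hF
  have hFB : (F : Set (Fin m → ℂ)) = B := hfin.coe_toFinset
  have hindF : LinearIndependent ℂ (fun v : (F : Set (Fin m → ℂ)) => (v : Fin m → ℂ)) :=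
    LinearIndepOn.mono (v := id) hind hFB.subset
  refine ⟨F, ?_, ?_, hindF, ?_⟩
  · rw [hFB]; exact hBs
  · have h1 : finrank ℂ (Submodule.span ℂ ((F : Set (Fin m → ℂ)))) = F.card :=
      finrank_span_finset_eq_card hindF
    rw [hFB, hspan, finrank_top, finrank_amb] at h1
    omega
  · intro Z hZ
    rw [hFB]
    exact hadapt Z hZ

lemma adapted_card_eq {B : Finset (Fin m → ℂ)}
    (hind : LinearIndependent ℂ (fun v : (B : Set (Fin m → ℂ)) => (v : Fin m → ℂ)))
    {Z : Submodule ℂ (Fin m → ℂ)}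
    (hadapt : Z ≤ Submodule.span ℂ ((B : Set (Fin m → ℂ)) ∩ ↑Z)) :
    (B.filter (fun v => v ∈ Z)).card = finrank ℂ Z := by
  classical
  have hcoe : ((B.filter (fun v => v ∈ Z) : Finset (Fin m → ℂ)) : Set (Fin m → ℂ))
      = (B : Set (Fin m → ℂ)) ∩ ↑Z := by
    ext x; simp [Finset.mem_filter]
  have hind' : LinearIndependent ℂ
      (fun v : ((B.filter (fun v => v ∈ Z) : Finset (Fin m → ℂ)) : Set (Fin m → ℂ)) => (v : Fin m → ℂ)) := by
    apply LinearIndepOn.mono (v := id) hind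
    rw [hcoe]
    exact Set.inter_subset_left
  have h1 := finrank_span_finset_eq_card hind'
  have hspaneq : Submodule.span ℂ
      ((B.filter (fun v => v ∈ Z) : Finset (Fin m → ℂ)) : Set (Fin m → ℂ)) = Z := by
    rw [hcoe]
    apply le_antisymm
    · rw [Submodule.span_le]
      exact Set.inter_subset_right
    · exact hadapt
  rw [hspaneq] at h1
  omega

end Aux4

section Aux5
open Module Submodule Finset
variable {m : ℕ}

/-- the modified configuration -/
noncomputable def wSub (w : (Fin m → ℂ) →₀ ℚ) (ε : ℚ) (B : Finset (Fin m → ℂ))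
    (hB : B ⊆ w.support) : (Fin m → ℂ) →₀ ℚ :=
  Finsupp.onFinset w.support (fun v => w v - if v ∈ B then ε else 0) (by
    intro v hv
    by_contra hns
    have h1 : w v = 0 := Finsupp.notMem_support_iff.mp hns
    have h2 : v ∉ B := fun hvB => hns (hB hvB)
    simp [h1, h2] at hv)

lemma wSub_apply (w : (Fin m → ℂ) →₀ ℚ) (ε : ℚ) (B : Finset (Fin m → ℂ))
    (hB : B ⊆ w.support) (v : Fin m → ℂ) :
    wSub w ε B hB v = w v - if v ∈ B then ε else 0 := rfl

lemma wSub_support (w : (Fin m → ℂ) →₀ ℚ) (ε : ℚ) (B : Finset (Fin m → ℂ))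
    (hB : B ⊆ w.support) : (wSub w ε B hB).support ⊆ w.support :=
  Finsupp.support_onFinset_subset

lemma wSub_totalMass (w : (Fin m → ℂ) →₀ ℚ) (ε : ℚ) (B : Finset (Fin m → ℂ))
    (hB : B ⊆ w.support) :
    totalMass m (wSub w ε B hB) = totalMass m w - ε * B.card := by
  classical
  unfold totalMass
  have h1 : ∑ v ∈ (wSub w ε B hB).support, wSub w ε B hB v
      = ∑ v ∈ w.support, wSub w ε B hB v := by
    apply Finset.sum_subset (wSub_support w ε B hB)
    intro x _ hx
    exact Finsupp.notMem_support_iff.mp hx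
  rw [h1]
  have h2 : ∑ v ∈ w.support, wSub w ε B hB v
      = ∑ v ∈ w.support, (w v - if v ∈ B then ε else 0) := rfl
  rw [h2, Finset.sum_sub_distrib]
  congr 1
  rw [Finset.sum_ite_mem, Finset.inter_eq_right.mpr hB, Finset.sum_const, nsmul_eq_mul]
  ring

lemma wSub_massOn (w : (Fin m → ℂ) →₀ ℚ) (ε : ℚ) (B : Finset (Fin m → ℂ))
    (hB : B ⊆ w.support) (V : Submodule ℂ (Fin m → ℂ)) :
    massOn m (wSub w ε B hB) V
      = massOn m w V - ε * (B.filter (fun v => v ∈ V)).card := by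
  classical
  rw [massOn_eq_sum_superset (wSub_support w ε B hB) V]
  have h2 : ∑ v ∈ w.support.filter (fun v => v ∈ V), wSub w ε B hB v
      = ∑ v ∈ w.support.filter (fun v => v ∈ V), (w v - if v ∈ B then ε else 0) := rfl
  rw [h2, Finset.sum_sub_distrib]
  have h3 : massOn m w V = ∑ v ∈ w.support.filter (fun v => v ∈ V), w v := rfl
  rw [← h3]
  congr 1
  rw [Finset.sum_ite_mem]
  have h4 : w.support.filter (fun v => v ∈ V) ∩ B = B.filter (fun v => v ∈ V) := by
    ext x
    simp only [Finset.mem_inter, Finset.mem_filter]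
    constructor
    · rintro ⟨⟨_, hV⟩, hxB⟩; exact ⟨hxB, hV⟩
    · rintro ⟨hxB, hV⟩; exact ⟨⟨hB hxB, hV⟩, hxB⟩
  rw [h4, Finset.sum_const, nsmul_eq_mul]
  ring

end Aux5

section Aux6
open Module Submodule Finset

/-- termination measure -/
noncomputable def mu (m : ℕ) (w : (Fin m → ℂ) →₀ ℚ) : ℕ :=
  3 ^ w.support.card +
    (w.support.powerset.filter
      (fun S : Finset (Fin m → ℂ) => ¬ Tight m w (Submodule.span ℂ (S : Set (Fin m → ℂ))))).card

variable {m : ℕ}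

lemma step_lemma (hm : 1 ≤ m) {w : (Fin m → ℂ) →₀ ℚ} (hw : ∀ v, 0 ≤ w v) (hw0 : w 0 = 0)
    (hss : Semistable m w) (hne : w.support.Nonempty) :
    ∃ (ε : ℚ) (B : Finset (Fin m → ℂ)) (w' : (Fin m → ℂ) →₀ ℚ),
      0 ≤ ε ∧ B.card = m ∧
      LinearIndependent ℂ (fun v : (B : Set (Fin m → ℂ)) => (v : Fin m → ℂ)) ∧
      (∀ v, w v = w' v + ε * (if v ∈ B then 1 else 0)) ∧
      (∀ v, 0 ≤ w' v) ∧ w' 0 = 0 ∧ Semistable m w' ∧ mu m w' < mu m w := by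
  classical
  have hm' : (0:ℚ) < m := by exact_mod_cast hm
  have hd : 0 < totalMass m w := by
    apply Finset.sum_pos
    · intro i hi
      exact lt_of_le_of_ne (hw i) (Ne.symm (Finsupp.mem_support_iff.mp hi))
    · exact hne
  obtain ⟨B, hBs, hBcard, hBind, hBad⟩ := exists_adapted_basis hm hw hw0 hss hd
  have hBsub : B ⊆ w.support := Finset.coe_subset.mp hBs
  set d : ℚ := totalMass m w with hd_def
  -- the ratio function
  set ratio : Finset (Fin m → ℂ) → ℚ := fun S =>
    ((finrank ℂ (Submodule.span ℂ (S : Set (Fin m → ℂ))) : ℚ) * d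
      - massOn m w (Submodule.span ℂ (S : Set (Fin m → ℂ))) * m) /
    ((m : ℚ) * ((finrank ℂ (Submodule.span ℂ (S : Set (Fin m → ℂ))) : ℚ)
      - ((B.filter (fun v => v ∈ Submodule.span ℂ (S : Set (Fin m → ℂ)))).card : ℚ))) with hratio
  set Scand : Finset (Finset (Fin m → ℂ)) := w.support.powerset.filter
    (fun S => (B.filter (fun v => v ∈ Submodule.span ℂ (S : Set (Fin m → ℂ)))).card
      < finrank ℂ (Submodule.span ℂ (S : Set (Fin m → ℂ)))) with hScand
  set Fset : Finset ℚ := B.image w ∪ Scand.image ratio with hFset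
  have hBne : B.Nonempty := Finset.card_pos.mp (by omega)
  have hFne : Fset.Nonempty := by
    obtain ⟨b, hb⟩ := hBne
    exact ⟨w b, Finset.mem_union_left _ (Finset.mem_image_of_mem w hb)⟩
  set ε : ℚ := Fset.min' hFne with hε
  -- positivity of all candidates
  have hratio_pos : ∀ S ∈ Scand, 0 < ratio S := by
    intro S hS
    obtain ⟨hSpow, hSc⟩ := Finset.mem_filter.mp hS
    set V := Submodule.span ℂ (S : Set (Fin m → ℂ))
    have hck : ((B.filter (fun v => v ∈ V)).card : ℚ) < (finrank ℂ V : ℚ) := by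
      exact_mod_cast hSc
    have hden : 0 < (m:ℚ) * ((finrank ℂ V : ℚ) - ((B.filter (fun v => v ∈ V)).card : ℚ)) := by
      apply mul_pos hm'
      linarith
    have hnum : 0 < (finrank ℂ V : ℚ) * d - massOn m w V * m := by
      have h1 := semistable_mul hm hss V
      rcases lt_or_eq_of_le h1 with h | h
      · linarith
      · exfalso
        have htight : Tight m w V := h
        have := adapted_card_eq hBind (hBad V htight)
        omega
    exact div_pos hnum hden
  have hFpos : ∀ x ∈ Fset, 0 < x := by
    intro x hx
    rcases Finset.mem_union.mp hx with hx | hx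
    · obtain ⟨v, hv, rfl⟩ := Finset.mem_image.mp hx
      exact lt_of_le_of_ne (hw v) (Ne.symm (Finsupp.mem_support_iff.mp (hBsub hv)))
    · obtain ⟨S, hS, rfl⟩ := Finset.mem_image.mp hx
      exact hratio_pos S hS
  have hεpos : 0 < ε := hFpos _ (Finset.min'_mem Fset hFne)
  have hεwv : ∀ v ∈ B, ε ≤ w v := fun v hv =>
    Finset.min'_le _ _ (Finset.mem_union_left _ (Finset.mem_image_of_mem w hv))
  have hεr : ∀ S ∈ Scand, ε ≤ ratio S := fun S hS =>
    Finset.min'_le _ _ (Finset.mem_union_right _ (Finset.mem_image_of_mem ratio hS))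
  -- the new configuration
  set w' : (Fin m → ℂ) →₀ ℚ := wSub w ε B hBsub with hw'
  have hd' : 0 ≤ d - ε * m := by
    have h1 : ∑ v ∈ B, ε ≤ ∑ v ∈ B, w v := Finset.sum_le_sum (fun i hi => hεwv i hi)
    have h2 : ∑ v ∈ B, w v ≤ d := by
      rw [hd_def]
      exact Finset.sum_le_sum_of_subset_of_nonneg hBsub (fun i _ _ => hw i)
    rw [Finset.sum_const, nsmul_eq_mul, hBcard] at h1
    linarith
  have htm' : totalMass m w' = d - ε * m := by
    rw [hw', wSub_totalMass, hBcard]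
  -- key estimate for essential subspaces
  have hkey : ∀ S : Finset (Fin m → ℂ), S ⊆ w.support →
      massOn m w' (Submodule.span ℂ (S : Set (Fin m → ℂ))) * m
        ≤ (finrank ℂ (Submodule.span ℂ (S : Set (Fin m → ℂ))) : ℚ) * (d - ε * m) := by
    intro S hS
    set V := Submodule.span ℂ (S : Set (Fin m → ℂ))
    set k : ℕ := finrank ℂ V with hk
    set c : ℕ := (B.filter (fun v => v ∈ V)).card with hc
    have hmass : massOn m w' V = massOn m w V - ε * c := wSub_massOn w ε B hBsub V
    by_cases hck : c < k
    · have hSc : S ∈ Scand := by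
        rw [hScand, Finset.mem_filter]
        exact ⟨Finset.mem_powerset.mpr hS, hck⟩
      have hr := hεr S hSc
      have hckQ : (c:ℚ) < (k:ℚ) := by exact_mod_cast hck
      have hden : 0 < (m:ℚ) * ((k:ℚ) - (c:ℚ)) := mul_pos hm' (by linarith)
      have hr1 : ε ≤ ((k:ℚ) * d - massOn m w V * m) / ((m:ℚ) * ((k:ℚ) - (c:ℚ))) := hr
      rw [le_div_iff₀ hden] at hr1
      rw [hmass]
      nlinarith [hr1]
    · push_neg at hck
      have h1 := semistable_mul hm hss V
      have hckQ : (k:ℚ) ≤ (c:ℚ) := by exact_mod_cast hck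
      have h2 : ε * (k:ℚ) * m ≤ ε * (c:ℚ) * m := by
        apply mul_le_mul_of_nonneg_right _ hm'.le
        exact mul_le_mul_of_nonneg_left hckQ hεpos.le
      rw [hmass]
      nlinarith [h1, h2]
  -- semistability of w'
  have hss' : Semistable m w' := by
    intro V
    set S : Finset (Fin m → ℂ) := w.support.filter (fun v => v ∈ V) with hS
    set V'' := Submodule.span ℂ (S : Set (Fin m → ℂ)) with hV''
    have hmeq : massOn m w' V = massOn m w' V'' := by
      rw [massOn_eq_sum_superset (wSub_support w ε B hBsub) V,
        massOn_eq_sum_superset (wSub_support w ε B hBsub) V'']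
      exact Finset.sum_congr (massOn_span_support_inter w V) fun _ _ => rfl
    have hk'' : finrank ℂ V'' ≤ finrank ℂ V := Submodule.finrank_mono (span_filter_le w V)
    rw [le_div_iff₀ hm', htm', hmeq]
    calc massOn m w' V'' * m ≤ (finrank ℂ V'' : ℚ) * (d - ε * m) :=
          hkey S (Finset.filter_subset _ _)
    _ ≤ (finrank ℂ V : ℚ) * (d - ε * m) := by
          apply mul_le_mul_of_nonneg_right _ hd'
          exact_mod_cast hk''
  -- tightness is preserved
  have htp : ∀ V, Tight m w V → Tight m w' V := by
    intro V hV
    have hcard := adapted_card_eq hBind (hBad V hV)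
    rw [Tight] at hV ⊢
    rw [hw', wSub_massOn, wSub_totalMass, hBcard, hcard]
    linear_combination hV
  -- configuration facts
  have hnn : ∀ v, 0 ≤ w' v := by
    intro v
    rw [hw', wSub_apply]
    by_cases hv : v ∈ B
    · rw [if_pos hv]
      linarith [hεwv v hv]
    · rw [if_neg hv]
      simpa using hw v
  have h0' : w' 0 = 0 := by
    have h0B : (0 : Fin m → ℂ) ∉ B := by
      intro h
      exact (Finsupp.mem_support_iff.mp (hBsub h)) hw0
    rw [hw', wSub_apply, if_neg h0B, hw0]
    ring
  have hrecon : ∀ v, w v = w' v + ε * (if v ∈ B then 1 else 0) := by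
    intro v
    rw [hw', wSub_apply]
    by_cases hv : v ∈ B <;> simp [hv]
  -- measure decrease
  have hsupp_sub : w'.support ⊆ w.support := wSub_support w ε B hBsub
  have hmu : mu m w' < mu m w := by
    by_cases hsupp_eq : w'.support = w.support
    · -- a new tight subspace appears
      have hpow_eq : w'.support.powerset = w.support.powerset := by rw [hsupp_eq]
      have hsubF : w'.support.powerset.filter
            (fun S : Finset (Fin m → ℂ) => ¬ Tight m w' (Submodule.span ℂ (S : Set (Fin m → ℂ))))
          ⊆ w.support.powerset.filter
            (fun S : Finset (Fin m → ℂ) => ¬ Tight m w (Submodule.span ℂ (S : Set (Fin m → ℂ)))) := by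
        intro S hSmem
        rw [Finset.mem_filter] at hSmem ⊢
        rw [hpow_eq] at hSmem
        exact ⟨hSmem.1, fun ht => hSmem.2 (htp _ ht)⟩
      -- find the new tight subspace
      have hmem : ε ∈ Fset := Finset.min'_mem Fset hFne
      rcases Finset.mem_union.mp hmem with hx | hx
      · exfalso
        obtain ⟨v₀, hv₀, hv₀eq⟩ := Finset.mem_image.mp hx
        have : w' v₀ = 0 := by
          rw [hw', wSub_apply, if_pos hv₀, hv₀eq]
          ring
        have h1 : v₀ ∉ w'.support := Finsupp.notMem_support_iff.mpr this
        rw [hsupp_eq] at h1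
        exact h1 (hBsub hv₀)
      · obtain ⟨S₀, hS₀mem, hS₀eq⟩ := Finset.mem_image.mp hx
        obtain ⟨hS₀pow, hS₀c⟩ := Finset.mem_filter.mp hS₀mem
        set V₀ := Submodule.span ℂ (S₀ : Set (Fin m → ℂ)) with hV₀
        set k₀ : ℕ := finrank ℂ V₀
        set c₀ : ℕ := (B.filter (fun v => v ∈ V₀)).card
        have hckQ : (c₀:ℚ) < (k₀:ℚ) := by exact_mod_cast hS₀c
        have hden : ((m:ℚ) * ((k₀:ℚ) - (c₀:ℚ))) ≠ 0 :=
          ne_of_gt (mul_pos hm' (by linarith))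
        have hnum : (k₀:ℚ) * d - massOn m w V₀ * m = ε * ((m:ℚ) * ((k₀:ℚ) - (c₀:ℚ))) := by
          have h1 : ((k₀:ℚ) * d - massOn m w V₀ * m) / ((m:ℚ) * ((k₀:ℚ) - (c₀:ℚ))) = ε := hS₀eq
          rw [div_eq_iff hden] at h1
          exact h1
        have hT' : Tight m w' V₀ := by
          rw [Tight, hw', wSub_massOn, wSub_totalMass, hBcard]
          linear_combination -hnum
        have hT : ¬ Tight m w V₀ := by
          intro h
          have := adapted_card_eq hBind (hBad V₀ h)
          omega
        have hS₀A : S₀ ∈ w.support.powerset.filter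
            (fun S : Finset (Fin m → ℂ) => ¬ Tight m w (Submodule.span ℂ (S : Set (Fin m → ℂ)))) :=
          Finset.mem_filter.mpr ⟨hS₀pow, hT⟩
        have hS₀A' : S₀ ∉ w'.support.powerset.filter
            (fun S : Finset (Fin m → ℂ) => ¬ Tight m w' (Submodule.span ℂ (S : Set (Fin m → ℂ)))) := by
          simp only [Finset.mem_filter, not_and, not_not]
          intro _
          exact hT'
        have hcardlt := Finset.card_lt_card
          ((Finset.ssubset_iff_of_subset hsubF).mpr ⟨S₀, hS₀A, hS₀A'⟩)
        rw [mu, mu]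
        have h3 : (3:ℕ) ^ w'.support.card = 3 ^ w.support.card := by rw [hsupp_eq]
        omega
    · -- the support shrinks
      have hss_sub : w'.support ⊂ w.support := ssubset_of_subset_of_ne hsupp_sub hsupp_eq
      have hcardlt : w'.support.card < w.support.card := Finset.card_lt_card hss_sub
      have h1 : (w'.support.powerset.filter
          (fun S : Finset (Fin m → ℂ) => ¬ Tight m w' (Submodule.span ℂ (S : Set (Fin m → ℂ))))).card
          ≤ 2 ^ w'.support.card := by
        calc _ ≤ w'.support.powerset.card := Finset.card_filter_le _ _
        _ = 2 ^ w'.support.card := Finset.card_powerset _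
      have h2 : (2:ℕ) ^ w'.support.card ≤ 3 ^ w'.support.card :=
        Nat.pow_le_pow_left (by norm_num) _
      have h3 : 3 ^ w'.support.card + 3 ^ w'.support.card < 3 ^ (w'.support.card + 1) := by
        have : 0 < (3:ℕ) ^ w'.support.card := Nat.pow_pos (by norm_num)
        rw [pow_succ]
        omega
      have h4 : (3:ℕ) ^ (w'.support.card + 1) ≤ 3 ^ w.support.card :=
        Nat.pow_le_pow_right (by norm_num) (by omega)
      rw [mu, mu]
      omega
  exact ⟨ε, B, w', hεpos.le, hBcard, hBind, hrecon, hnn, h0', hss', hmu⟩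

end Aux6

/-- Decomposability: `w` is a finite nonnegative rational combination of indicator
functions of bases of `ℂ^m` (each a set of `m` linearly independent vectors). -/
def Decomposable (m : ℕ) (w : (Fin m → ℂ) →₀ ℚ) : Prop :=
  ∃ (r : ℕ) (c : Fin r → ℚ) (B : Fin r → Finset (Fin m → ℂ)),
    (∀ t, 0 ≤ c t) ∧
    (∀ t, (B t).card = m ∧
      LinearIndependent ℂ (fun v : (B t : Set (Fin m → ℂ)) => (v : Fin m → ℂ))) ∧
    (∀ v, w v = ∑ t, c t * (if v ∈ B t then 1 else 0))

lemma main_aux {m : ℕ} (hm : 1 ≤ m) : ∀ (N : ℕ) (w : (Fin m → ℂ) →₀ ℚ),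
    mu m w ≤ N → IsConfiguration m w → Semistable m w → Decomposable m w := by
  intro N
  induction N with
  | zero =>
    intro w hmu _ _
    exfalso
    have h1 : 0 < 3 ^ w.support.card := Nat.pow_pos (by norm_num)
    rw [mu] at hmu
    omega
  | succ N ih =>
    intro w hmu hw hss
    by_cases hsupp : w.support = ∅
    · have hw0 : w = 0 := Finsupp.support_eq_empty.mp hsupp
      refine ⟨0, Fin.elim0, Fin.elim0, fun t => t.elim0, fun t => t.elim0, ?_⟩
      intro v
      rw [hw0]
      simp
    · obtain ⟨ε, B, w', hε0, hBcard, hBind, hrecon, hnn, h0', hss', hmu'⟩ :=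
        step_lemma hm hw.1 hw.2 hss (Finset.nonempty_of_ne_empty hsupp)
      obtain ⟨r, c, Bs, hc, hB, hsum⟩ := ih w' (by omega) ⟨hnn, h0'⟩ hss'
      refine ⟨r+1, Fin.cons ε c, Fin.cons B Bs, ?_, ?_, ?_⟩
      · intro t
        refine Fin.cases ?_ ?_ t
        · exact hε0
        · exact hc
      · intro t
        refine Fin.cases ?_ ?_ t
        · exact ⟨hBcard, hBind⟩
        · exact hB
      · intro v
        rw [hrecon v, hsum v, Fin.sum_univ_succ]
        simp only [Fin.cons_zero, Fin.cons_succ]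
        ring


/-- Every semistable configuration in `ℂ^m` (`m ≥ 1`) is decomposable. -/
theorem semistable_imp_decomposable (m : ℕ) (hm : 1 ≤ m)
    (w : (Fin m → ℂ) →₀ ℚ) (hw : IsConfiguration m w) (hss : Semistable m w) :
    Decomposable m w :=
  main_aux hm (mu m w) w le_rfl hw hss
end

section
/- Every decomposable configuration in ℂ^m (m ≥ 1) is semistable. -/
open scoped Classical

/-- Every decomposable configuration in `ℂ^m` (`m ≥ 1`) is semistable. -/
theorem decomposable_imp_semistable (m : ℕ) (hm : 1 ≤ m)
    (w : (Fin m → ℂ) →₀ ℚ) (hw : IsConfiguration m w) (hdec : Decomposable m w) :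
    Semistable m w := by
  obtain ⟨r, c, B, hc, hB, hwv⟩ := hdec
  intro V
  set U : Finset (Fin m → ℂ) := w.support ∪ Finset.univ.biUnion B with hU
  have hBU : ∀ t, B t ⊆ U := fun t v hv =>
    Finset.mem_union_right _ (Finset.mem_biUnion.mpr ⟨t, Finset.mem_univ t, hv⟩)
  have key : ∀ s : Finset (Fin m → ℂ), ∑ v ∈ s, w v
      = ∑ t, c t * ((s.filter (fun v => v ∈ B t)).card : ℚ) := by
    intro s
    rw [Finset.sum_congr rfl (fun v _ => hwv v), Finset.sum_comm]
    refine Finset.sum_congr rfl fun t _ => ?_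
    rw [← Finset.mul_sum]
    congr 1
    rw [Finset.sum_boole]
  -- mass on V
  have hmass : massOn m w V = ∑ t, c t * (((B t).filter (fun v => v ∈ V)).card : ℚ) := by
    have h1 : massOn m w V = ∑ v ∈ U.filter (fun v => v ∈ V), w v := by
      refine Finset.sum_subset (Finset.filter_subset_filter _ Finset.subset_union_left) ?_
      intro v hv hnv
      by_contra h
      exact hnv (Finset.mem_filter.mpr
        ⟨Finsupp.mem_support_iff.mpr h, (Finset.mem_filter.mp hv).2⟩)
    rw [h1, key]
    refine Finset.sum_congr rfl fun t _ => ?_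
    have hfe : (U.filter (fun v => v ∈ V)).filter (fun v => v ∈ B t)
        = (B t).filter (fun v => v ∈ V) := by
      ext v
      simp only [Finset.mem_filter]
      constructor
      · rintro ⟨⟨-, hvV⟩, hvB⟩; exact ⟨hvB, hvV⟩
      · rintro ⟨hvB, hvV⟩; exact ⟨⟨hBU t hvB, hvV⟩, hvB⟩
    rw [hfe]
  -- total mass
  have htotal : totalMass m w = (∑ t, c t) * m := by
    have h1 : totalMass m w = ∑ v ∈ U, w v := by
      refine Finset.sum_subset Finset.subset_union_left ?_
      intro v hv hnv
      by_contra h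
      exact hnv (Finsupp.mem_support_iff.mpr h)
    rw [h1, key, Finset.sum_mul]
    refine Finset.sum_congr rfl fun t _ => ?_
    have : U.filter (fun v => v ∈ B t) = B t := by
      ext v
      simp only [Finset.mem_filter]
      exact ⟨fun h => h.2, fun h => ⟨hBU t h, h⟩⟩
    rw [this, (hB t).1]
  -- cardinality bound
  have hcard : ∀ t, (((B t).filter (fun v => v ∈ V)).card : ℚ)
      ≤ (Module.finrank ℂ V : ℚ) := by
    intro t
    have hli : LinearIndependent ℂ
        (fun v : ((((B t).filter (fun v => v ∈ V)) : Finset _) : Set (Fin m → ℂ)) =>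
          (v : Fin m → ℂ)) := by
      refine linearIndependent_subtype_iff.mpr ((linearIndependent_subtype_iff.mp (hB t).2).mono ?_)
      intro v hv
      exact Finset.mem_coe.mpr (Finset.filter_subset _ _ (Finset.mem_coe.mp hv))
    have hspan : Submodule.span ℂ ((((B t).filter (fun v => v ∈ V)) : Finset _) :
        Set (Fin m → ℂ)) ≤ V := by
      rw [Submodule.span_le]
      intro v hv
      exact (Finset.mem_filter.mp (Finset.mem_coe.mp hv)).2
    have h1 := finrank_span_finset_eq_card (R := ℂ) hli
    have h2 := Submodule.finrank_mono (R := ℂ) hspan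
    rw [h1] at h2
    exact_mod_cast h2
  -- conclude
  rw [hmass, htotal]
  have hm0 : (m : ℚ) ≠ 0 := by positivity
  have hrhs : (Module.finrank ℂ V : ℚ) * ((∑ t, c t) * m) / m
      = ∑ t, c t * (Module.finrank ℂ V : ℚ) := by
    rw [← Finset.sum_mul]
    field_simp
  rw [hrhs]
  refine Finset.sum_le_sum fun t _ => ?_
  exact mul_le_mul_of_nonneg_left (hcard t) (hc t)
end

section
/- Let w be a semistable configuration in ℂ^m of total mass d > 0, and let V ⊆ ℂ^m be a complex linear subspace of dimension k with 0 < k < m such that w(V) = k·d/m exactly. Let π : ℂ^m → ℂ^m/V be the quotient map, and define the pushforward configuration w̄ on ℂ^m/V by w̄(u) = ∑_{v ∉ V, π(v) = u} w(v) for u ≠ 0 (and w̄(0) = 0). Then w̄ is a semistable configuration in the (m−k)-dimensional space ℂ^m/V of total mass (m−k)·d/m; that is, every complex linear subspace of ℂ^m/V of dimension j has w̄-mass at most j·d/m. -/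
open scoped Classical

/-- Pushing a semistable configuration forward to the quotient by a subspace
realizing equality `w(V) = k·d/m` yields a semistable configuration on `ℂ^m/V`
of total mass `(m-k)·d/m`. -/
theorem pushforward_semistable (m : ℕ) (hm : 1 ≤ m)
    (w : (Fin m → ℂ) →₀ ℚ) (hw : IsConfiguration m w) (hss : Semistable m w)
    (d : ℚ) (hd : totalMass m w = d) (hdpos : 0 < d)
    (V : Submodule ℂ (Fin m → ℂ)) (k : ℕ) (hk : Module.finrank ℂ V = k)
    (hk0 : 0 < k) (hkm : k < m)
    (heq : massOn m w V = (k : ℚ) * d / (m : ℚ)) :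
    (∑ v ∈ w.support.filter (fun v => v ∉ V), w v) = ((m : ℚ) - k) * d / (m : ℚ) ∧
    ∀ W : Submodule ℂ ((Fin m → ℂ) ⧸ V),
      (∑ v ∈ w.support.filter (fun v => v ∉ V ∧ V.mkQ v ∈ W), w v)
        ≤ (Module.finrank ℂ W : ℚ) * d / (m : ℚ) := by
  classical
  have hm0 : (m : ℚ) ≠ 0 := by positivity
  -- first part
  have hsplit : massOn m w V + (∑ v ∈ w.support.filter (fun v => v ∉ V), w v)
      = totalMass m w := by
    unfold massOn totalMass
    exact Finset.sum_filter_add_sum_filter_not _ _ _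
  constructor
  · have : (∑ v ∈ w.support.filter (fun v => v ∉ V), w v)
        = d - (k : ℚ) * d / (m : ℚ) := by
      rw [← heq]; linarith [hsplit, hd]
    rw [this]; field_simp
  · intro W
    set U : Submodule ℂ (Fin m → ℂ) := W.comap V.mkQ with hUdef
    have hVU : V ≤ U := by
      intro v hv
      have : V.mkQ v = 0 := (Submodule.Quotient.mk_eq_zero V).2 hv
      simp [hUdef, Submodule.mem_comap, this]
    -- finrank U = finrank W + k
    have hfr : Module.finrank ℂ U = Module.finrank ℂ W + k := by
      have h1 := LinearMap.finrank_range_add_finrank_ker (V.mkQ.domRestrict U)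
      rw [LinearMap.range_domRestrict, LinearMap.ker_domRestrict, Submodule.ker_mkQ] at h1
      have hmap : U.map V.mkQ = W := by
        rw [hUdef, Submodule.map_comap_eq, Submodule.range_mkQ, top_inf_eq]
      have h2 : Module.finrank ℂ (V.comap U.subtype) = k := by
        rw [← hk]
        exact LinearEquiv.finrank_eq (Submodule.comapSubtypeEquivOfLe hVU)
      rw [hmap, h2] at h1
      omega
    -- sum identity
    have hsum : massOn m w V + (∑ v ∈ w.support.filter (fun v => v ∉ V ∧ V.mkQ v ∈ W), w v)
        = massOn m w U := by
      unfold massOn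
      have h3 := Finset.sum_filter_add_sum_filter_not
        (w.support.filter (fun v => v ∈ U)) (fun v => v ∈ V) w
      rw [Finset.filter_filter, Finset.filter_filter] at h3
      have e1 : w.support.filter (fun v => v ∈ U ∧ v ∈ V)
          = w.support.filter (fun v => v ∈ V) := by
        apply Finset.filter_congr; intro v _
        simp only [eq_iff_iff, and_iff_right_iff_imp]
        exact fun h => hVU h
      have e2 : w.support.filter (fun v => v ∈ U ∧ v ∉ V)
          = w.support.filter (fun v => v ∉ V ∧ V.mkQ v ∈ W) := by
        apply Finset.filter_congr; intro v _
        simp only [hUdef, Submodule.mem_comap, eq_iff_iff]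
        tauto
      rw [e1, e2] at h3
      exact h3
    have hU := hss U
    rw [hfr, hd, heq] at *
    have : (∑ v ∈ w.support.filter (fun v => v ∉ V ∧ V.mkQ v ∈ W), w v)
        ≤ ((Module.finrank ℂ W + k : ℕ) : ℚ) * d / (m : ℚ) - (k : ℚ) * d / (m : ℚ) := by
      linarith [hsum, hU]
    calc _ ≤ ((Module.finrank ℂ W + k : ℕ) : ℚ) * d / (m : ℚ) - (k : ℚ) * d / (m : ℚ) := this
      _ = (Module.finrank ℂ W : ℚ) * d / (m : ℚ) := by push_cast; ring
end

section
/- Let m ≥ 2 and let w be a stable configuration in ℂ^m of positive total mass. Then for every v₁ in the support of w there exists v₂ in the support of w such that v₂ is not a scalar multiple of v₁ and ⟨v₁, v₂⟩ ≠ 0 (standard Hermitian inner product on ℂ^m). -/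
open scoped Classical

/-- Stability: semistable, and strict inequality for every proper nontrivial subspace. -/
noncomputable def Stable (m : ℕ) (w : (Fin m → ℂ) →₀ ℚ) : Prop :=
  Semistable m w ∧
  ∀ V : Submodule ℂ (Fin m → ℂ), 0 < Module.finrank ℂ V → Module.finrank ℂ V < m →
    massOn m w V < (Module.finrank ℂ V : ℚ) * totalMass m w / (m : ℚ)

/-- For a stable configuration of positive total mass in `ℂ^m` (`m ≥ 2`), every
support vector `v₁` admits a support vector `v₂` that is not a scalar multiple of
`v₁` and is not Hermitian-orthogonal to `v₁`. -/
theorem stable_exists_nonorthogonal (m : ℕ) (hm : 2 ≤ m)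
    (w : (Fin m → ℂ) →₀ ℚ) (hw : IsConfiguration m w) (hst : Stable m w)
    (hpos : 0 < totalMass m w) (v₁ : Fin m → ℂ) (hv₁ : v₁ ∈ w.support) :
    ∃ v₂ ∈ w.support, (∀ c : ℂ, v₂ ≠ c • v₁) ∧
      (∑ j, v₁ j * (starRingEnd ℂ) (v₂ j)) ≠ 0 := by
  by_contra hcon
  push_neg at hcon
  have hv₁0 : v₁ ≠ 0 := by
    intro h
    rw [Finsupp.mem_support_iff, h] at hv₁
    exact hv₁ hw.2
  set f : (Fin m → ℂ) →ₗ[ℂ] ℂ :=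
    { toFun := fun v => ∑ j, (starRingEnd ℂ) (v₁ j) * v j,
      map_add' := by
        intro x y
        simp [mul_add, Finset.sum_add_distrib],
      map_smul' := by
        intro c x
        simp only [Pi.smul_apply, smul_eq_mul, RingHom.id_apply, Finset.mul_sum]
        exact Finset.sum_congr rfl fun j _ => by ring } with hf
  have hfv₁ : f v₁ ≠ 0 := by
    have h1 : f v₁ = ((∑ j, Complex.normSq (v₁ j) : ℝ) : ℂ) := by
      simp [hf, Complex.normSq_eq_conj_mul_self]
    rw [h1, Complex.ofReal_ne_zero]
    intro h0
    apply hv₁0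
    funext j
    have := (Finset.sum_eq_zero_iff_of_nonneg
      (fun i _ => Complex.normSq_nonneg (v₁ i))).mp h0 j (Finset.mem_univ j)
    exact Complex.normSq_eq_zero.mp this
  set L : Submodule ℂ (Fin m → ℂ) := ℂ ∙ v₁ with hL
  set V : Submodule ℂ (Fin m → ℂ) := LinearMap.ker f with hV
  have hdimL : Module.finrank ℂ L = 1 := finrank_span_singleton hv₁0
  have hrange : LinearMap.range f = ⊤ := by
    rw [LinearMap.range_eq_top]
    intro c
    exact ⟨(c / f v₁) • v₁, by simp [div_mul_cancel₀ _ hfv₁]⟩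
  have hdimV : Module.finrank ℂ V = m - 1 := by
    have h1 := LinearMap.finrank_range_add_finrank_ker f
    rw [hrange, ← hV] at h1
    rw [show Module.finrank ℂ (⊤ : Submodule ℂ ℂ) = 1 by simp [finrank_top],
      show Module.finrank ℂ (Fin m → ℂ) = m by simp] at h1
    omega
  have hsub : ∀ v ∈ w.support, v ∈ L ∨ v ∈ V := by
    intro v hv
    by_cases hc : ∃ c : ℂ, v = c • v₁
    · obtain ⟨c, rfl⟩ := hc
      left; exact Submodule.smul_mem _ c (Submodule.mem_span_singleton_self v₁)
    · push_neg at hc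
      have horth := hcon v hv hc
      right
      rw [hV, LinearMap.mem_ker]
      have hcj : (starRingEnd ℂ) (f v) = 0 := by
        rw [hf]
        simp only [LinearMap.coe_mk, AddHom.coe_mk, map_sum, map_mul,
          RingHomCompTriple.comp_apply, RingHom.id_apply, Complex.conj_conj]
        simpa using horth
      have := congrArg (starRingEnd ℂ) hcj
      simpa using this
  have hmass : totalMass m w ≤ massOn m w L + massOn m w V := by
    unfold totalMass massOn
    have hsubset : w.support ⊆ w.support.filter (· ∈ L) ∪ w.support.filter (· ∈ V) := by
      intro v hv
      rcases hsub v hv with h | h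
      · exact Finset.mem_union_left _ (Finset.mem_filter.mpr ⟨hv, h⟩)
      · exact Finset.mem_union_right _ (Finset.mem_filter.mpr ⟨hv, h⟩)
    have h4 := Finset.sum_union_inter (s₁ := w.support.filter (· ∈ L))
      (s₂ := w.support.filter (· ∈ V)) (f := fun v => w v)
    have h5 : 0 ≤ ∑ v ∈ w.support.filter (· ∈ L) ∩ w.support.filter (· ∈ V), w v :=
      Finset.sum_nonneg fun v _ => hw.1 v
    have h6 : ∑ v ∈ w.support, w v
        ≤ ∑ v ∈ w.support.filter (· ∈ L) ∪ w.support.filter (· ∈ V), w v :=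
      Finset.sum_le_sum_of_subset_of_nonneg hsubset (fun v _ _ => hw.1 v)
    linarith
  have hLlt : massOn m w L < (1 : ℚ) * totalMass m w / m := by
    have := hst.2 L (by rw [hdimL]; omega) (by rw [hdimL]; omega)
    rwa [hdimL] at this
  have hVlt : massOn m w V < ((m - 1 : ℕ) : ℚ) * totalMass m w / m := by
    have := hst.2 V (by rw [hdimV]; omega) (by rw [hdimV]; omega)
    rwa [hdimV] at this
  have hmQ : (m : ℚ) ≠ 0 := by
    have : (0 : ℚ) < m := by exact_mod_cast Nat.lt_of_lt_of_le (by norm_num) hm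
    linarith
  have hfinal : (1 : ℚ) * totalMass m w / m + ((m - 1 : ℕ) : ℚ) * totalMass m w / m
      = totalMass m w := by
    rw [Nat.cast_sub (by omega : 1 ≤ m)]
    field_simp
    ring
  linarith
end

section
/- Let m ≥ 2 and let w be a stable configuration in ℂ^m of positive total mass. Then there exist vectors v₁,…,v_m in the support of w that are linearly independent but not pairwise orthogonal, i.e., ⟨v_a, v_b⟩ ≠ 0 for some a ≠ b (standard Hermitian inner product on ℂ^m). -/
open scoped Classical

/-- The ℂ-linear map `x ↦ ⟨x, u⟩`. -/
noncomputable def innerU (m : ℕ) (u : Fin m → ℂ) : (Fin m → ℂ) →ₗ[ℂ] ℂ where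
  toFun x := ∑ j, x j * (starRingEnd ℂ) (u j)
  map_add' x y := by simp [add_mul, Finset.sum_add_distrib]
  map_smul' c x := by simp [Finset.mul_sum, mul_assoc]

lemma innerU_self_ne (m : ℕ) (u : Fin m → ℂ) (hu : u ≠ 0) : innerU m u u ≠ 0 := by
  intro h
  apply hu
  simp only [innerU, LinearMap.coe_mk, AddHom.coe_mk, Complex.mul_conj] at h
  rw [← Complex.ofReal_sum] at h
  have h2 : ∑ j, Complex.normSq (u j) = 0 := by exact_mod_cast h
  have := (Finset.sum_eq_zero_iff_of_nonneg (fun j _ => Complex.normSq_nonneg (u j))).mp h2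
  funext j
  exact Complex.normSq_eq_zero.mp (this j (Finset.mem_univ j))

lemma finrank_ker_innerU (m : ℕ) (u : Fin m → ℂ) (hu : u ≠ 0) :
    Module.finrank ℂ (LinearMap.ker (innerU m u)) = m - 1 := by
  have h1 := LinearMap.finrank_range_add_finrank_ker (innerU m u)
  have hr : Module.finrank ℂ (LinearMap.range (innerU m u)) = 1 := by
    have hle : Module.finrank ℂ (LinearMap.range (innerU m u)) ≤ 1 := by
      simpa using Submodule.finrank_le (LinearMap.range (innerU m u))
    have hpos : 0 < Module.finrank ℂ (LinearMap.range (innerU m u)) := by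
      rw [Module.finrank_pos_iff_exists_ne_zero]
      refine ⟨⟨innerU m u u, LinearMap.mem_range_self _ u⟩, ?_⟩
      simpa [Submodule.mk_eq_zero] using innerU_self_ne m u hu
    omega
  rw [hr, Module.finrank_pi] at h1
  simp only [Fintype.card_fin] at h1
  omega

/-- A stable configuration of positive total mass in `ℂ^m` (`m ≥ 2`) has `m`
support vectors that are linearly independent but not pairwise orthogonal. -/
theorem stable_exists_indep_nonorthogonal (m : ℕ) (hm : 2 ≤ m)
    (w : (Fin m → ℂ) →₀ ℚ) (hw : IsConfiguration m w) (hst : Stable m w)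
    (hpos : 0 < totalMass m w) :
    ∃ v : Fin m → (Fin m → ℂ), (∀ i, v i ∈ w.support) ∧ LinearIndependent ℂ v ∧
      ∃ a b : Fin m, a ≠ b ∧ (∑ j, (v a) j * (starRingEnd ℂ) ((v b) j)) ≠ 0 := by
  classical
  obtain ⟨hnn, h0⟩ := hw
  obtain ⟨hss, hstrict⟩ := hst
  by_contra hcon
  push_neg at hcon
  have hmQ : (0 : ℚ) < m := by exact_mod_cast lt_of_lt_of_le two_pos hm
  have hfrk : Module.finrank ℂ (Fin m → ℂ) = m := by
    rw [Module.finrank_pi]; simp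
  have hsupp_ne : ∀ x ∈ w.support, x ≠ (0 : Fin m → ℂ) := by
    intro x hx hx0
    rw [Finsupp.mem_support_iff, hx0, h0] at hx
    exact hx rfl
  have hsupp_nonempty : w.support.Nonempty := by
    by_contra hne
    rw [Finset.not_nonempty_iff_eq_empty] at hne
    rw [totalMass, hne, Finset.sum_empty] at hpos
    exact lt_irrefl 0 hpos
  set d := totalMass m w with hd
  -- Step 1: support spans
  have hspan : Submodule.span ℂ (w.support : Set (Fin m → ℂ)) = ⊤ := by
    set T := Submodule.span ℂ (w.support : Set (Fin m → ℂ)) with hT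
    have hmassT : massOn m w T = d := by
      rw [hd]
      unfold massOn totalMass
      have hfeq : Finset.filter (fun v => v ∈ T) w.support = w.support :=
        Finset.filter_true_of_mem (fun v hv => Submodule.subset_span hv)
      rw [hfeq]
    have hle : Module.finrank ℂ T ≤ m := by
      have := Submodule.finrank_le T
      rwa [hfrk] at this
    have hposT : 0 < Module.finrank ℂ T := by
      rw [Module.finrank_pos_iff_exists_ne_zero]
      obtain ⟨x, hx⟩ := hsupp_nonempty
      refine ⟨⟨x, Submodule.subset_span hx⟩, ?_⟩
      simpa [Submodule.mk_eq_zero] using hsupp_ne x hx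
    have heq : Module.finrank ℂ T = m := by
      by_contra hne
      have hlt : Module.finrank ℂ T < m := lt_of_le_of_ne hle hne
      have hstr := hstrict T hposT hlt
      rw [hmassT] at hstr
      have hdm : (Module.finrank ℂ T : ℚ) * d / m < d := by
        rw [div_lt_iff₀ hmQ]
        have : (Module.finrank ℂ T : ℚ) < m := by exact_mod_cast hlt
        nlinarith
      linarith
    exact Submodule.eq_top_of_finrank_eq (by rw [heq, hfrk])
  obtain ⟨u, hu⟩ := hsupp_nonempty
  have hune : u ≠ 0 := hsupp_ne u hu
  -- Step 2: any support vector outside ℂ∙u is orthogonal to u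
  have horth : ∀ x ∈ w.support, x ∉ Submodule.span ℂ ({u} : Set (Fin m → ℂ)) →
      innerU m u x = 0 := by
    intro x hx hxu
    have hxu_ne : x ≠ u := by
      intro h
      exact hxu (by rw [h]; exact Submodule.mem_span_singleton_self u)
    have hxne_u : x ∉ ({u} : Set (Fin m → ℂ)) := by
      simpa using hxu_ne
    have hli2 : LinearIndependent ℂ ((↑) : (insert x {u} : Set (Fin m → ℂ)) → (Fin m → ℂ)) := by
      show LinearIndepOn ℂ id (insert x {u})
      rw [linearIndepOn_id_insert hxne_u]
      exact ⟨(linearIndepOn_singleton_iff ℂ).2 hune, hxu⟩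
    have hsub : (insert x {u} : Set (Fin m → ℂ)) ⊆ (w.support : Set (Fin m → ℂ)) := by
      intro y hy
      rcases hy with rfl | hy
      · exact hx
      · rw [Set.mem_singleton_iff] at hy; exact hy ▸ hu
    obtain ⟨b, hbt, hsb, htb, hli⟩ := exists_linearIndepOn_id_extension hli2 hsub
    replace hli : LinearIndependent ℂ ((↑) : b → (Fin m → ℂ)) := hli
    have hspanb : Submodule.span ℂ b = ⊤ := by
      rw [eq_top_iff, ← hspan]
      exact Submodule.span_le.mpr htb
    have hbfin : b.Finite := Set.Finite.subset w.support.finite_toSet hbt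
    haveI : Fintype b := hbfin.fintype
    let bas : Module.Basis b ℂ (Fin m → ℂ) := Module.Basis.mk hli (by rw [Subtype.range_coe, hspanb])
    have hcard : Fintype.card b = m := by
      rw [← Module.finrank_eq_card_basis bas, hfrk]
    let e : Fin m ≃ b := (Fintype.equivFinOfCardEq hcard).symm
    let v : Fin m → (Fin m → ℂ) := fun i => ((e i : b) : Fin m → ℂ)
    have hvmem : ∀ i, v i ∈ w.support := fun i => hbt (e i).2
    have hvli : LinearIndependent ℂ v := hli.comp e e.injective
    have hub : u ∈ b := hsb (Set.mem_insert_of_mem x rfl)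
    have hxb : x ∈ b := hsb (Set.mem_insert x {u})
    let a1 : Fin m := e.symm ⟨u, hub⟩
    let a2 : Fin m := e.symm ⟨x, hxb⟩
    have hane : a1 ≠ a2 := by
      intro h
      apply hxu_ne
      have h2 := congrArg e h
      simp only [a1, a2, Equiv.apply_symm_apply] at h2
      exact (congrArg Subtype.val h2).symm
    have hzero := hcon v hvmem hvli a1 a2 hane
    have hva1 : v a1 = u := by simp [v, a1]
    have hva2 : v a2 = x := by simp [v, a2]
    rw [hva1, hva2] at hzero
    have hconj : (starRingEnd ℂ) (∑ j, u j * (starRingEnd ℂ) (x j)) = 0 := by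
      rw [hzero]; simp
    simpa [innerU, map_sum, mul_comm] using hconj
  -- Step 3: mass contradiction
  set V : Submodule ℂ (Fin m → ℂ) := Submodule.span ℂ ({u} : Set (Fin m → ℂ)) with hV
  set W : Submodule ℂ (Fin m → ℂ) := LinearMap.ker (innerU m u) with hW
  have hVrank : Module.finrank ℂ V = 1 := finrank_span_singleton hune
  have hWrank : Module.finrank ℂ W = m - 1 := finrank_ker_innerU m u hune
  have hVlt : massOn m w V < 1 * d / m := by
    have h1 : 0 < Module.finrank ℂ V := by rw [hVrank]; norm_num
    have h2 : Module.finrank ℂ V < m := by rw [hVrank]; omega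
    have := hstrict V h1 h2
    rwa [hVrank, Nat.cast_one] at this
  have hWle : massOn m w W ≤ ((m : ℚ) - 1) * d / m := by
    have := hss W
    rwa [hWrank, Nat.cast_sub (by omega), Nat.cast_one] at this
  have hsplit : d ≤ massOn m w V + massOn m w W := by
    have h1 : d = (∑ v ∈ w.support.filter (fun v => v ∈ V), w v) +
        ∑ v ∈ w.support.filter (fun v => v ∉ V), w v := by
      rw [hd]
      unfold totalMass
      exact (Finset.sum_filter_add_sum_filter_not _ _ _).symm
    have h2 : (w.support.filter (fun v => v ∉ V)) ⊆ (w.support.filter (fun v => v ∈ W)) := by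
      intro x hx
      rw [Finset.mem_filter] at hx ⊢
      exact ⟨hx.1, LinearMap.mem_ker.mpr (horth x hx.1 hx.2)⟩
    have h3 : ∑ v ∈ w.support.filter (fun v => v ∉ V), w v ≤
        ∑ v ∈ w.support.filter (fun v => v ∈ W), w v :=
      Finset.sum_le_sum_of_subset_of_nonneg h2 (fun i _ _ => hnn i)
    unfold massOn
    linarith
  have hfinal : 1 * d / m + ((m : ℚ) - 1) * d / m = d := by
    field_simp
    ring
  linarith
end

section
/- Let N ≥ 1 and let w be a stable configuration in ℂ^{N+1} all of whose values are nonnegative integers, of total mass d. Let v₁,…,v_{N+1} be linearly independent vectors in the support of w. Then the configuration w′ defined by w′(v_i) = w(v_i) − 1/(N+1)² for i = 1,…,N+1 and w′(v) = w(v) for all other v is a semistable configuration in ℂ^{N+1} (of total mass d − 1/(N+1)). -/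
open scoped Classical

/-- Subtracting `1/(N+1)²` from the weights of `N+1` linearly independent support
vectors of an integral stable configuration in `ℂ^{N+1}` leaves a semistable
configuration, of total mass `d - 1/(N+1)`. -/
theorem stable_sub_basis_semistable (N : ℕ) (hN : 1 ≤ N)
    (w : (Fin (N+1) → ℂ) →₀ ℚ) (hw : IsConfiguration (N+1) w)
    (hint : ∀ v, ∃ n : ℕ, w v = (n : ℚ))
    (hst : Stable (N+1) w) (d : ℚ) (hd : totalMass (N+1) w = d)
    (v : Fin (N+1) → (Fin (N+1) → ℂ)) (hsupp : ∀ i, v i ∈ w.support)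
    (hind : LinearIndependent ℂ v) :
    IsConfiguration (N+1) (w - ∑ i, Finsupp.single (v i) (1 / ((N:ℚ)+1)^2)) ∧
    Semistable (N+1) (w - ∑ i, Finsupp.single (v i) (1 / ((N:ℚ)+1)^2)) ∧
    totalMass (N+1) (w - ∑ i, Finsupp.single (v i) (1 / ((N:ℚ)+1)^2))
      = d - 1 / ((N:ℚ)+1) := by
  classical
  set ε : ℚ := 1 / ((N:ℚ)+1)^2 with hε
  set u : (Fin (N+1) → ℂ) →₀ ℚ := ∑ i, Finsupp.single (v i) ε with hu
  have hmq : (0:ℚ) < (N:ℚ) + 1 := by positivity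
  have hNq : (2:ℚ) ≤ (N:ℚ) + 1 := by
    have : (1:ℚ) ≤ (N:ℚ) := by exact_mod_cast hN
    linarith
  have hεpos : 0 < ε := by rw [hε]; positivity
  have hεlt : ε < 1 := by
    rw [hε, div_lt_one (by positivity)]
    nlinarith
  have hvinj : Function.Injective v := hind.injective
  have hu_apply : ∀ x, u x = ∑ i, if v i = x then ε else 0 := by
    intro x
    rw [hu, Finsupp.finset_sum_apply]
    exact Finset.sum_congr rfl fun i _ => Finsupp.single_apply
  have hu_v : ∀ j, u (v j) = ε := by
    intro j
    rw [hu_apply]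
    rw [Finset.sum_eq_single j]
    · simp
    · intro i _ hij
      simp only [ite_eq_right_iff]
      intro h; exact absurd (hvinj h) hij
    · simp
  have hu_nr : ∀ x, (∀ i, v i ≠ x) → u x = 0 := by
    intro x hx
    rw [hu_apply]
    exact Finset.sum_eq_zero fun i _ => by simp [hx i]
  have hw1 : ∀ i, 1 ≤ w (v i) := by
    intro i
    obtain ⟨n, hn⟩ := hint (v i)
    have hne : w (v i) ≠ 0 := Finsupp.mem_support_iff.mp (hsupp i)
    have : n ≠ 0 := by rintro rfl; simp [hn] at hne
    rw [hn]
    exact_mod_cast Nat.one_le_iff_ne_zero.mpr this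
  have hnn : ∀ x, 0 ≤ (w - u) x := by
    intro x
    rw [Finsupp.sub_apply]
    by_cases hx : ∃ i, v i = x
    · obtain ⟨i, rfl⟩ := hx
      rw [hu_v]
      linarith [hw1 i]
    · push_neg at hx
      rw [hu_nr x hx, sub_zero]
      exact hw.1 x
  have hv0 : ∀ i, v i ≠ 0 := fun i => hind.ne_zero i
  have h0 : (w - u) 0 = 0 := by
    rw [Finsupp.sub_apply, hu_nr 0 hv0, hw.2, sub_zero]
  have hsupp_eq : (w - u).support = w.support := by
    ext x
    simp only [Finsupp.mem_support_iff, Finsupp.sub_apply]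
    by_cases hx : ∃ i, v i = x
    · obtain ⟨i, rfl⟩ := hx
      rw [hu_v]
      constructor
      · intro _; have := hw1 i; intro h; rw [h] at this; linarith
      · intro _; have := hw1 i; intro h; linarith
    · push_neg at hx
      rw [hu_nr x hx, sub_zero]
  have hsum_u : ∀ S : Finset (Fin (N+1) → ℂ),
      ∑ x ∈ S, u x = ε * (Finset.univ.filter (fun i => v i ∈ S)).card := by
    intro S
    calc ∑ x ∈ S, u x = ∑ x ∈ S, ∑ i, if v i = x then ε else 0 :=
          Finset.sum_congr rfl fun x _ => hu_apply x
      _ = ∑ i, ∑ x ∈ S, if v i = x then ε else 0 := Finset.sum_comm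
      _ = ∑ i, if v i ∈ S then ε else 0 := by
          refine Finset.sum_congr rfl fun i _ => ?_
          exact Finset.sum_ite_eq S (v i) (fun _ => ε)
      _ = ε * (Finset.univ.filter (fun i => v i ∈ S)).card := by
          rw [Finset.sum_ite, Finset.sum_const, Finset.sum_const]
          simp [mul_comm]
  -- integrality
  choose nw hnw using hint
  have hsum_nat : ∀ S : Finset (Fin (N+1) → ℂ),
      ∑ x ∈ S, w x = ((∑ x ∈ S, nw x : ℕ) : ℚ) := by
    intro S
    push_cast
    exact Finset.sum_congr rfl fun x _ => hnw x
  -- total mass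
  have htm : totalMass (N+1) (w - u) = d - 1 / ((N:ℚ)+1) := by
    rw [totalMass, hsupp_eq]
    simp only [Finsupp.sub_apply]
    rw [Finset.sum_sub_distrib, hsum_u]
    have hfil : Finset.univ.filter (fun i => v i ∈ w.support) = Finset.univ :=
      Finset.filter_true_of_mem fun i _ => hsupp i
    rw [hfil, ← hd, totalMass]
    have hc : (Finset.univ : Finset (Fin (N+1))).card = N + 1 := by simp
    rw [hc, hε]
    push_cast
    field_simp
  refine ⟨⟨hnn, h0⟩, ?_, htm⟩
  -- semistability
  intro V
  set k := Module.finrank ℂ V with hk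
  have hk_le : k ≤ N + 1 := by
    have := Submodule.finrank_le V
    simpa [Module.finrank_fin_fun] using this
  rcases Nat.eq_zero_or_pos k with hk0 | hkpos
  · -- k = 0
    have hVbot : V = ⊥ := Submodule.finrank_eq_zero.mp hk0
    have hfil : (w - u).support.filter (fun x => x ∈ V) = ∅ := by
      ext x
      simp only [Finset.mem_filter, Finsupp.mem_support_iff, hVbot, Submodule.mem_bot,
        Finset.notMem_empty, iff_false, not_and]
      rintro hx rfl
      exact hx h0
    rw [massOn, hfil, hk0]
    simp
  rcases eq_or_lt_of_le hk_le with hktop | hklt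
  · -- k = N + 1
    have hle : massOn (N+1) (w - u) V ≤ totalMass (N+1) (w - u) :=
      Finset.sum_le_sum_of_subset_of_nonneg (Finset.filter_subset _ _)
        (fun x _ _ => hnn x)
    rw [hktop]
    rw [mul_div_cancel_left₀ _ (show ((N+1:ℕ):ℚ) ≠ 0 by positivity)]
    exact hle
  -- main case 0 < k < N + 1
  set T := Finset.univ.filter (fun i => v i ∈ V) with hT
  set s := T.card with hs
  -- mass formula
  have hmass : massOn (N+1) (w - u) V = massOn (N+1) w V - ε * s := by
    rw [massOn, massOn, hsupp_eq]
    simp only [Finsupp.sub_apply]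
    rw [Finset.sum_sub_distrib, hsum_u]
    have hfilter : Finset.univ.filter
        (fun i => v i ∈ w.support.filter (fun x => x ∈ V)) = T := by
      apply Finset.filter_congr
      intro i _
      simp [Finset.mem_filter, hsupp i]
    rw [hfilter]
  -- s ≤ k
  have hsk : s ≤ k := by
    have hf : LinearIndependent ℂ
        (fun i : T => (⟨v i, (Finset.mem_filter.mp i.2).2⟩ : V)) := by
      apply LinearIndependent.of_comp V.subtype
      exact hind.comp _ Subtype.val_injective
    simpa [Fintype.card_coe] using hf.fintype_card_le_finrank
  -- strict inequality from stability
  obtain ⟨M, hM⟩ : ∃ M : ℕ, massOn (N+1) w V = (M : ℚ) := ⟨_, hsum_nat _⟩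
  obtain ⟨D, hD⟩ : ∃ D : ℕ, d = (D : ℚ) := by
    refine ⟨∑ x ∈ w.support, nw x, ?_⟩
    rw [← hd, totalMass]; exact hsum_nat _
  have hstrict := hst.2 V hkpos (by simpa [Module.finrank_fin_fun] using hklt)
  rw [hM, hd, hD] at hstrict
  have hMm : (M : ℚ) * ((N:ℚ)+1) < (k:ℚ) * (D:ℚ) := by
    rw [lt_div_iff₀ (by exact_mod_cast hmq : (0:ℚ) < ((N+1:ℕ):ℚ))] at hstrict
    push_cast at hstrict ⊢
    linarith
  have hMmn : M * (N+1) < k * D := by exact_mod_cast (by push_cast; linarith : ((M * (N+1) : ℕ) : ℚ) < ((k * D : ℕ) : ℚ))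
  have hMle : (M:ℚ) * ((N:ℚ)+1) ≤ (k:ℚ) * (D:ℚ) - 1 := by
    have := Nat.succ_le_of_lt hMmn
    have : ((M * (N+1) + 1 : ℕ) : ℚ) ≤ ((k * D : ℕ) : ℚ) := by exact_mod_cast this
    push_cast at this
    linarith
  -- finish
  rw [hmass, htm, hM, hD]
  set a : ℚ := 1 / ((N:ℚ)+1) with ha
  have ha0 : 0 < a := by rw [ha]; positivity
  have ham : a * ((N:ℚ)+1) = 1 := by rw [ha]; field_simp
  have hεa : ε = a * a := by rw [hε, ha]; field_simp
  have hcast : ((N+1:ℕ):ℚ) = (N:ℚ) + 1 := by push_cast; ring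
  rw [hcast, le_div_iff₀ hmq, hεa]
  have hkq : (k:ℚ) ≤ (N:ℚ) + 1 := by exact_mod_cast hk_le
  have hsq : (0:ℚ) ≤ (s:ℚ) := Nat.cast_nonneg s
  have hskq : (s:ℚ) ≤ (k:ℚ) := by exact_mod_cast hsk
  have h3 : a * ((k:ℚ) - (s:ℚ)) ≤ 1 := by
    have : a * ((k:ℚ) - (s:ℚ)) ≤ a * ((N:ℚ)+1) :=
      mul_le_mul_of_nonneg_left (by linarith) ha0.le
    linarith [ham ▸ this]
  have expand : ((M:ℚ) - a * a * (s:ℚ)) * ((N:ℚ)+1)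
      = (M:ℚ) * ((N:ℚ)+1) - a * (s:ℚ) := by
    have : ((M:ℚ) - a * a * (s:ℚ)) * ((N:ℚ)+1)
        = (M:ℚ) * ((N:ℚ)+1) - a * (s:ℚ) * (a * ((N:ℚ)+1)) := by ring
    rw [this, ham, mul_one]
  rw [expand]
  nlinarith [hMle, h3]
end
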